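/- For any LFSA S with secret states Q_S: strong current-state opacity implies current-state opacity, strong initial-state opacity implies initial-state opacity, strong infinite-step opacity implies infinite-step opacity, and strong K-step opacity implies K-step opacity; but the converses fail in general (e.g., the four-state automaton with runs q1 →a q2 and q3 →a q4, secret states {q2,q3}, is CSO but not SCSO). -/
import Mathlib


/-- A labeled finite-state automaton (LFSA): transition relation `δ`,
initial states `Q0`, labeling `lab` (where `none` stands for ε, i.e. unobservable). -/
structure LFSA (Q : Type*) (E : Type*) (A : Type*) where
  δ : Q → E → Q → Prop
  Q0 : Set Q
  lab : E → Option A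

namespace LFSA

variable {Q Q1 Q2 E A : Type*}

/-- A run `q →s q'` over a finite event sequence. -/
inductive Run (S : LFSA Q E A) : Q → List E → Q → Prop
  | nil (q : Q) : Run S q [] q
  | cons {q q' q'' : Q} {e : E} {s : List E} :
      S.δ q e q' → Run S q' s q'' → Run S q (e :: s) q''

/-- Output (label sequence) of an event sequence. -/
def out (S : LFSA Q E A) (s : List E) : List A := s.filterMap S.lab

/-- Generated finite language. -/
def L (S : LFSA Q E A) : Set (List E) := {s | ∃ q0 ∈ S.Q0, ∃ q, S.Run q0 s q}

/-- Current-state estimate after observing `σ`. -/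
def M (S : LFSA Q E A) (σ : List A) : Set Q :=
  {q | ∃ q0 ∈ S.Q0, ∃ s : List E, S.out s = σ ∧ S.Run q0 s q}

/-- Reachability via a nonempty event sequence. -/
def ReachPlus (S : LFSA Q E A) (q q' : Q) : Prop := ∃ s : List E, s ≠ [] ∧ S.Run q s q'

/-- There is a transition cycle reachable from `q` (a cycle at `q` itself counts). -/
def CycleReachableFrom (S : LFSA Q E A) (q : Q) : Prop :=
  ∃ p : Q, (p = q ∨ S.ReachPlus q p) ∧ ∃ s : List E, s ≠ [] ∧ S.Run p s p

/-- `*`-strong detectability. -/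
def StarSD (S : LFSA Q E A) : Prop :=
  ∃ k : ℕ, 0 < k ∧ ∀ s ∈ S.L, ∀ σ : List A, σ <+: S.out s → k < σ.length →
    ∃ q : Q, S.M σ = {q}

/-- ω-strong detectability. -/
def OmegaSD (S : LFSA Q E A) : Prop :=
  ∃ k : ℕ, 0 < k ∧ ∀ (s : ℕ → E) (ρ : ℕ → Q), ρ 0 ∈ S.Q0 →
    (∀ n : ℕ, S.δ (ρ n) (s n) (ρ (n + 1))) →
    ∀ (n : ℕ) (σ : List A), σ <+: S.out (List.ofFn (fun i : Fin n => s i)) →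
      k < σ.length → ∃ q : Q, S.M σ = {q}

/-- Concurrent composition: observable transitions with equal labels synchronize,
unobservable transitions interleave. Events are pairs over `Option E` (`none` = ε). -/
def CC (S1 : LFSA Q1 E A) (S2 : LFSA Q2 E A) :
    LFSA (Q1 × Q2) (Option E × Option E) A where
  δ p ev p' :=
    match ev with
    | (some e, some e') =>
        (∃ a : A, S1.lab e = some a ∧ S2.lab e' = some a) ∧
          S1.δ p.1 e p'.1 ∧ S2.δ p.2 e' p'.2
    | (some e, none) => S1.lab e = none ∧ S1.δ p.1 e p'.1 ∧ p.2 = p'.2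
    | (none, some e') => S2.lab e' = none ∧ p.1 = p'.1 ∧ S2.δ p.2 e' p'.2
    | (none, none) => False
  Q0 := {p | p.1 ∈ S1.Q0 ∧ p.2 ∈ S2.Q0}
  lab ev := ev.1.bind S1.lab

/-- Left projection of an event sequence of a concurrent composition. -/
def lproj (s : List (Option E × Option E)) : List E := s.filterMap Prod.fst

/-- Right projection of an event sequence of a concurrent composition. -/
def rproj (s : List (Option E × Option E)) : List E := s.filterMap Prod.snd

/-- Unobservable reach of a set of states. -/
def UR (S : LFSA Q E A) (X : Set Q) : Set Q :=
  {q | ∃ q0 ∈ X, ∃ s : List E, S.out s = [] ∧ S.Run q0 s q}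

/-- One step of the observer (powerset construction). -/
def obsStep (S : LFSA Q E A) (x : Set Q) (a : A) : Set Q :=
  {q' | ∃ q ∈ x, ∃ (e : E) (p : Q), S.lab e = some a ∧ S.δ q e p ∧ q' ∈ S.UR {p}}

/-- Observer run (deterministic). -/
def obsRun (S : LFSA Q E A) (x : Set Q) (σ : List A) : Set Q := σ.foldl S.obsStep x

/-- The concurrent composition `CC(S_ε, Obs^ε)` of `S` (with events relabeled by their
labels) and a deterministic observer with step function `ostep` and initial state `x0`:
observable transitions move both components, unobservable ones move only the left one. -/
def CCObs (S : LFSA Q E A) (ostep : Set Q → A → Set Q) (x0 : Set Q) :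
    LFSA (Q × Set Q) E A where
  δ p e p' := S.δ p.1 e p'.1 ∧
    (∀ a : A, S.lab e = some a → p'.2 = ostep p.2 a) ∧
    (S.lab e = none → p'.2 = p.2)
  Q0 := {p | p.1 ∈ S.Q0 ∧ p.2 = x0}
  lab := S.lab

/-- A state is reachable if it is an initial state or reachable from one. -/
def Reachable (S : LFSA Q E A) (q : Q) : Prop := ∃ q0 ∈ S.Q0, ∃ s : List E, S.Run q0 s q

/-- Restriction of an automaton to a set of allowed states. -/
def restrict (S : LFSA Q E A) (P : Set Q) : LFSA Q E A where
  δ q e q' := S.δ q e q' ∧ q ∈ P ∧ q' ∈ P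
  Q0 := S.Q0 ∩ P
  lab := S.lab

/-- A run all of whose states (including endpoints) lie in `P`. -/
inductive RunIn (S : LFSA Q E A) (P : Set Q) : Q → List E → Q → Prop
  | nil (q : Q) : q ∈ P → RunIn S P q [] q
  | cons {q q' q'' : Q} {e : E} {s : List E} :
      q ∈ P → S.δ q e q' → RunIn S P q' s q'' → RunIn S P q (e :: s) q''

/-- Normal subautomaton: all faulty transitions removed. -/
def Sn (S : LFSA Q E A) (Ef : Set E) : LFSA Q E A where
  δ q e q' := S.δ q e q' ∧ e ∉ Ef
  Q0 := S.Q0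
  lab := S.lab

/-- Faulty subautomaton: faulty transitions together with all their
predecessor and successor transitions. -/
def Sf (S : LFSA Q E A) (Ef : Set E) : LFSA Q E A where
  δ q e q' := S.δ q e q' ∧ ∃ c f d, f ∈ Ef ∧ S.δ c f d ∧
      ((q = c ∧ e = f ∧ q' = d) ∨ (c = q' ∨ S.ReachPlus q' c) ∨ (q = d ∨ S.ReachPlus d q))
  Q0 := S.Q0
  lab := S.lab

/-- `s` ends with a faulty event. -/
def EndsFaulty (Ef : Set E) (s : List E) : Prop := ∃ (t : List E) (e : E), e ∈ Ef ∧ s = t ++ [e]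

/-- `E_f`-diagnosability. -/
def Diag (S : LFSA Q E A) (Ef : Set E) : Prop :=
  ∃ k : ℕ, ∀ s ∈ S.L, EndsFaulty Ef s → ∀ s' : List E, s ++ s' ∈ S.L → k < s'.length →
    ∀ s'' ∈ S.L, S.out s'' = S.out (s ++ s') → ∃ e ∈ Ef, e ∈ s''

/-- `E_f`-predictability. -/
def Pred (S : LFSA Q E A) (Ef : Set E) : Prop :=
  ∃ k : ℕ, ∀ s ∈ S.L, EndsFaulty Ef s →
    ∃ s' : List E, s' <+: s ∧ (∀ e ∈ s', e ∉ Ef) ∧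
      ∀ u v : List E, u ++ v ∈ S.L → S.out s' = S.out u → (∀ e ∈ u, e ∉ Ef) →
        k < v.length → ∃ e ∈ Ef, e ∈ v

/-- Current-state opacity. -/
def CSO (S : LFSA Q E A) (QS : Set Q) : Prop :=
  ∀ q0 ∈ S.Q0, ∀ (s : List E) (q : Q), S.Run q0 s q → q ∈ QS →
    ∃ q0' ∈ S.Q0, ∃ (s' : List E) (q' : Q), S.Run q0' s' q' ∧ q' ∉ QS ∧ S.out s = S.out s'

/-- Initial-state opacity. -/
def ISO (S : LFSA Q E A) (QS : Set Q) : Prop :=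
  ∀ q0 ∈ S.Q0 ∩ QS, ∀ (s : List E) (q : Q), S.Run q0 s q →
    ∃ q0' ∈ S.Q0 \ QS, ∃ (s' : List E) (q' : Q), S.Run q0' s' q' ∧ S.out s = S.out s'

/-- Infinite-step opacity. -/
def InfSO (S : LFSA Q E A) (QS : Set Q) : Prop :=
  ∀ q0 ∈ S.Q0, ∀ (s1 : List E) (q1 : Q) (s2 : List E) (q2 : Q),
    S.Run q0 s1 q1 → S.Run q1 s2 q2 → q1 ∈ QS →
    ∃ q0' ∈ S.Q0, ∃ (s1' : List E) (q1' : Q) (s2' : List E) (q2' : Q),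
      S.Run q0' s1' q1' ∧ S.Run q1' s2' q2' ∧ q1' ∉ QS ∧
        S.out s1 = S.out s1' ∧ S.out s2 = S.out s2'

/-- `K`-step opacity. -/
def KSO (S : LFSA Q E A) (QS : Set Q) (K : ℕ) : Prop :=
  ∀ q0 ∈ S.Q0, ∀ (s1 : List E) (q1 : Q) (s2 : List E) (q2 : Q),
    S.Run q0 s1 q1 → S.Run q1 s2 q2 → q1 ∈ QS → (S.out s2).length ≤ K →
    ∃ q0' ∈ S.Q0, ∃ (s1' : List E) (q1' : Q) (s2' : List E) (q2' : Q),
      S.Run q0' s1' q1' ∧ S.Run q1' s2' q2' ∧ q1' ∉ QS ∧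
        S.out s1 = S.out s1' ∧ S.out s2 = S.out s2'

/-- Strong current-state opacity: the matching run is entirely non-secret. -/
def SCSO (S : LFSA Q E A) (QS : Set Q) : Prop :=
  ∀ q0 ∈ S.Q0, ∀ (s : List E) (q : Q), S.Run q0 s q → q ∈ QS →
    ∃ q0' ∈ S.Q0, ∃ (s' : List E) (q' : Q), S.RunIn QSᶜ q0' s' q' ∧ S.out s = S.out s'

/-- Strong initial-state opacity. -/
def SISO (S : LFSA Q E A) (QS : Set Q) : Prop :=
  ∀ q0 ∈ S.Q0 ∩ QS, ∀ (s : List E) (q : Q), S.Run q0 s q →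
    ∃ q0' ∈ S.Q0 \ QS, ∃ (s' : List E) (q' : Q), S.RunIn QSᶜ q0' s' q' ∧ S.out s = S.out s'

/-- Strong infinite-step opacity. -/
def SInfSO (S : LFSA Q E A) (QS : Set Q) : Prop :=
  ∀ q0 ∈ S.Q0, ∀ (s1 : List E) (q1 : Q) (s2 : List E) (q2 : Q),
    S.Run q0 s1 q1 → S.Run q1 s2 q2 → q1 ∈ QS →
    ∃ q0' ∈ S.Q0, ∃ (s1' : List E) (q1' : Q) (s2' : List E) (q2' : Q),
      S.RunIn QSᶜ q0' s1' q1' ∧ S.RunIn QSᶜ q1' s2' q2' ∧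
        S.out s1 = S.out s1' ∧ S.out s2 = S.out s2'

/-- Strong `K`-step opacity. -/
def SKSO (S : LFSA Q E A) (QS : Set Q) (K : ℕ) : Prop :=
  ∀ q0 ∈ S.Q0, ∀ (s1 : List E) (q1 : Q) (s2 : List E) (q2 : Q),
    S.Run q0 s1 q1 → S.Run q1 s2 q2 → q1 ∈ QS → (S.out s2).length ≤ K →
    ∃ q0' ∈ S.Q0, ∃ (s1' : List E) (q1' : Q) (s2' : List E) (q2' : Q),
      S.RunIn QSᶜ q0' s1' q1' ∧ S.RunIn QSᶜ q1' s2' q2' ∧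
        S.out s1 = S.out s1' ∧ S.out s2 = S.out s2'

/-- Observer step of the secret-deleted subautomaton `S_dss`. -/
def dssObsStep (S : LFSA Q E A) (QS : Set Q) : Set Q → A → Set Q :=
  (S.restrict QSᶜ).obsStep

/-- Initial observer state of the secret-deleted subautomaton. -/
def dssInit (S : LFSA Q E A) (QS : Set Q) : Set Q :=
  (S.restrict QSᶜ).UR (S.restrict QSᶜ).Q0

theorem RunIn.toRun {S : LFSA Q E A} {P : Set Q} {q q' : Q} {s : List E}
    (h : S.RunIn P q s q') : S.Run q s q' := by
  induction h with
  | nil q _ => exact Run.nil q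
  | cons hq hd _ ih => exact Run.cons hd ih

theorem RunIn.head_mem {S : LFSA Q E A} {P : Set Q} {q q' : Q} {s : List E}
    (h : S.RunIn P q s q') : q ∈ P := by
  cases h with
  | nil _ hq => exact hq
  | cons hq _ _ => exact hq

theorem RunIn.last_mem {S : LFSA Q E A} {P : Set Q} {q q' : Q} {s : List E}
    (h : S.RunIn P q s q') : q' ∈ P := by
  induction h with
  | nil q hq => exact hq
  | cons _ _ _ ih => exact ih

end LFSA

/-- The counterexample automaton. -/
def Sx : LFSA (Fin 4) Unit Unit where
  δ q _ q' := (q = 0 ∧ q' = 1) ∨ (q = 2 ∧ q' = 3)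
  Q0 := {0, 2}
  lab _ := some ()

theorem Sx_run_dead {q : Fin 4} (hq : q = 1 ∨ q = 3) {s : List Unit} {q' : Fin 4}
    (h : Sx.Run q s q') : s = [] ∧ q' = q := by
  cases h with
  | nil => exact ⟨rfl, rfl⟩
  | cons hd _ =>
      rcases hd with ⟨h1, _⟩ | ⟨h1, _⟩ <;> rcases hq with hq | hq <;> simp [hq] at h1

theorem Sx_run {q0 : Fin 4} (hq0 : q0 ∈ Sx.Q0) {s : List Unit} {q : Fin 4}
    (h : Sx.Run q0 s q) :
    (s = [] ∧ q = q0) ∨ (s = [()] ∧ ((q0 = 0 ∧ q = 1) ∨ (q0 = 2 ∧ q = 3))) := by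
  cases h with
  | nil => exact Or.inl ⟨rfl, rfl⟩
  | @cons _ q1 _ e s' hd hr =>
      rcases hd with ⟨h1, h2⟩ | ⟨h1, h2⟩
      · obtain ⟨hs, hq⟩ := Sx_run_dead (Or.inl h2) hr
        exact Or.inr ⟨by simp [hs], Or.inl ⟨h1, by rw [hq, h2]⟩⟩
      · obtain ⟨hs, hq⟩ := Sx_run_dead (Or.inr h2) hr
        exact Or.inr ⟨by simp [hs], Or.inr ⟨h1, by rw [hq, h2]⟩⟩

/-- the strong opacity notions imply the corresponding standard
ones, and the converses fail in general (witnessed by the four-state automaton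
with runs q1 →a q2, q3 →a q4 and secret states {q2, q3}). -/
theorem stmt19 :
    (∀ {Q E A : Type} (S : LFSA Q E A) (QS : Set Q),
      (S.SCSO QS → S.CSO QS) ∧ (S.SISO QS → S.ISO QS) ∧
      (S.SInfSO QS → S.InfSO QS) ∧ (∀ K : ℕ, S.SKSO QS K → S.KSO QS K)) ∧
    (∃ (S : LFSA (Fin 4) Unit Unit) (QS : Set (Fin 4)), S.CSO QS ∧ ¬ S.SCSO QS) := by
  constructor
  · intro Q E A S QS
    refine ⟨?_, ?_, ?_, ?_⟩
    · intro h q0 hq0 s q hr hq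
      obtain ⟨q0', hq0', s', q', hr', hout⟩ := h q0 hq0 s q hr hq
      exact ⟨q0', hq0', s', q', hr'.toRun, hr'.last_mem, hout⟩
    · intro h q0 hq0 s q hr
      obtain ⟨q0', hq0', s', q', hr', hout⟩ := h q0 hq0 s q hr
      exact ⟨q0', hq0', s', q', hr'.toRun, hout⟩
    · intro h q0 hq0 s1 q1 s2 q2 hr1 hr2 hq1
      obtain ⟨q0', hq0', s1', q1', s2', q2', hr1', hr2', h1, h2⟩ :=
        h q0 hq0 s1 q1 s2 q2 hr1 hr2 hq1
      exact ⟨q0', hq0', s1', q1', s2', q2', hr1'.toRun, hr2'.toRun, hr1'.last_mem, h1, h2⟩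
    · intro K h q0 hq0 s1 q1 s2 q2 hr1 hr2 hq1 hlen
      obtain ⟨q0', hq0', s1', q1', s2', q2', hr1', hr2', h1, h2⟩ :=
        h q0 hq0 s1 q1 s2 q2 hr1 hr2 hq1 hlen
      exact ⟨q0', hq0', s1', q1', s2', q2', hr1'.toRun, hr2'.toRun, hr1'.last_mem, h1, h2⟩
  · refine ⟨Sx, {1, 2}, ?_, ?_⟩
    · intro q0 hq0 s q hr hq
      rcases Sx_run hq0 hr with ⟨hs, hqq⟩ | ⟨hs, ⟨hq0', hq'⟩ | ⟨hq0', hq'⟩⟩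
      · -- s = [], q = q0 ∈ {0,2} ∩ {1,2}, so q0 = 2
        refine ⟨0, Or.inl rfl, [], 0, LFSA.Run.nil 0, by simp, by simp [hs]⟩
      · -- q0 = 0, q = 1; match with 2 →a 3
        refine ⟨2, Or.inr rfl, [()], 3,
          LFSA.Run.cons (Or.inr ⟨rfl, rfl⟩) (LFSA.Run.nil 3), by simp, by simp [hs]⟩
      · -- q = 3, contradiction with q ∈ {1,2}
        subst hq'
        simp at hq
    · intro h
      obtain ⟨q0', hq0', s', q', hr', hout⟩ :=
        h 0 (Or.inl rfl) [()] 1 (LFSA.Run.cons (Or.inl ⟨rfl, rfl⟩) (LFSA.Run.nil 1)) (Or.inl rfl)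
      -- out s' = [()] means s' nonempty
      have hs' : s' ≠ [] := by
        intro hnil
        rw [hnil] at hout
        simp [LFSA.out, Sx] at hout
      -- q0' ∈ {0,2} and q0' ∉ {1,2} so q0' = 0
      have h0 : q0' = 0 := by
        have hmem := hr'.head_mem
        rcases hq0' with h | h
        · exact h
        · exact absurd (Or.inr h) hmem
      subst h0
      cases hr' with
      | nil => exact hs' rfl
      | @cons _ q1 _ e t _ hd hrest =>
          have hq1 : q1 = 1 := by
            rcases hd with ⟨_, h2⟩ | ⟨h1, _⟩
            · exact h2
            · simp [Sx] at h1
          exact hrest.head_mem (Or.inl hq1)
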